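/- Assume that the exponent δ of ψ satisfies δ > 1. Fix r > 1 and for each integer n ≥ 2 set s_n := φ(exp(n^r)) and b_n := log log φ⁻¹(s_n) / φ⁻¹(s_n). Then almost surely lim_{n → ∞} U_{b_{n+1}/r} / s_n = 0. -/

import Mathlib

open MeasureTheory Filter Set Topology
open scoped ENNReal

set_option maxHeartbeats 2000000 in
theorem negligible_last_passage
    (ψ : ℝ → ℝ) (a b : ℝ) (hb : 0 ≤ b) (ν : Measure ℝ)
    (hνsupp : ν (Set.Iic 0) = 0)
    (hνint : ∫⁻ x, ENNReal.ofReal (min 1 (x ^ 2)) ∂ν ≠ ⊤)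
    (hψform : ∀ l : ℝ, 0 ≤ l →
      ψ l = a * l + b * l ^ 2 +
        ∫ x, (Real.exp (-l * x) - 1 + l * x * Set.indicator (Set.Iio 1) (fun _ => (1 : ℝ)) x) ∂ν)
    (hψpos : ∀ u : ℝ, 0 < u → 0 < ψ u)
    (hGrey : ∀ t : ℝ, 0 < t → IntegrableOn (fun u => (ψ u)⁻¹) (Set.Ioi t))
    (hdiv : ¬ IntegrableOn (fun u => (ψ u)⁻¹) (Set.Ioc 0 1))
    (φ : ℝ → ℝ)
    (hφ : ∀ t : ℝ, 0 < t → φ t = ∫ u in Set.Ioi t, (ψ u)⁻¹)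
    (hφanti : StrictAntiOn φ (Set.Ioi 0))
    (hφcont : ContinuousOn φ (Set.Ioi 0))
    (hφbij : Set.BijOn φ (Set.Ioi 0) (Set.Ioi 0))
    (φinv : ℝ → ℝ)
    (hφinvpos : ∀ s : ℝ, 0 < s → 0 < φinv s)
    (hinvl : ∀ t : ℝ, 0 < t → φinv (φ t) = t)
    (hinvr : ∀ s : ℝ, 0 < s → φ (φinv s) = s)
    (hδ : 1 < sSup {c : ℝ | 0 ≤ c ∧ ∃ Q : ℝ, 0 < Q ∧
      ∀ u v : ℝ, 1 ≤ u → u ≤ v → Q * ψ u * u ^ (-c) ≤ ψ v * v ^ (-c)})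
    {Ω : Type*} [MeasurableSpace Ω] (P : Measure Ω) [IsProbabilityMeasure P]
    (U : ℝ → Ω → ℝ≥0∞) (hUmeas : ∀ x : ℝ, Measurable (U x))
    (hUmono : ∀ ω : Ω, ∀ x y : ℝ, 0 < x → x ≤ y → U x ω ≤ U y ω)
    (hUdist : ∀ x t : ℝ, 0 < x → 0 < t →
      P {ω | U x ω ≤ ENNReal.ofReal t} = ENNReal.ofReal (Real.exp (-x * φinv t)))
    (r : ℝ) (hr : 1 < r)
    (s' b' : ℕ → ℝ)
    (hs' : ∀ n : ℕ, s' n = φ (Real.exp ((n : ℝ) ^ r)))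
    (hb' : ∀ n : ℕ, b' n = Real.log (Real.log (φinv (s' n))) / φinv (s' n)) :
    ∀ᵐ ω ∂P, Tendsto (fun n : ℕ => U (b' (n + 1) / r) ω / ENNReal.ofReal (s' n))
      atTop (nhds 0) := by
  -- extract the regular variation exponent
  have hSne : {c : ℝ | 0 ≤ c ∧ ∃ Q : ℝ, 0 < Q ∧
      ∀ u v : ℝ, 1 ≤ u → u ≤ v → Q * ψ u * u ^ (-c) ≤ ψ v * v ^ (-c)}.Nonempty := by
    by_contra h
    rw [Set.not_nonempty_iff_eq_empty] at h
    rw [h, Real.sSup_empty] at hδ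
    linarith
  obtain ⟨c, hcmem, hc1⟩ := exists_lt_of_lt_csSup hSne hδ
  obtain ⟨hc0, Q, hQ, hcomp⟩ := hcmem
  have hc1' : (0:ℝ) < c - 1 := by linarith
  have hφpos : ∀ t : ℝ, 0 < t → 0 < φ t := fun t ht => mem_Ioi.1 (hφbij.mapsTo (mem_Ioi.2 ht))
  have hr0 : (0:ℝ) < r := by linarith
  -- upper bound on φ(M t)
  have hA : ∀ t M : ℝ, 1 ≤ t → 1 ≤ M → φ (M * t) ≤ M ^ (1 - c) * t / (Q * (c - 1) * ψ t) := by
    intro t M ht hM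
    have ht0 : (0:ℝ) < t := by linarith
    have hM0 : (0:ℝ) < M := by linarith
    have hMt : (0:ℝ) < M * t := by positivity
    have hψt : 0 < ψ t := hψpos t ht0
    rw [hφ _ hMt]
    have hle : ∫ u in Ioi (M*t), (ψ u)⁻¹ ≤ ∫ u in Ioi (M*t), (t ^ c / (Q * ψ t)) * u ^ (-c) := by
      refine setIntegral_mono_on (hGrey _ hMt)
        ((integrableOn_Ioi_rpow_of_lt (by linarith) hMt).const_mul _) measurableSet_Ioi ?_
      intro u hu
      have hut : t ≤ u := le_trans (le_mul_of_one_le_left ht0.le hM) (mem_Ioi.1 hu).le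
      have hu0 : (0:ℝ) < u := lt_of_lt_of_le ht0 hut
      have hψu : 0 < ψ u := hψpos u hu0
      have h1 : Q * ψ t * t ^ (-c) ≤ ψ u * u ^ (-c) := hcomp t u ht hut
      have h2 : Q * ψ t * t ^ (-c) * u ^ c ≤ ψ u := by
        have := mul_le_mul_of_nonneg_right h1 (Real.rpow_nonneg hu0.le c)
        calc Q * ψ t * t ^ (-c) * u ^ c ≤ ψ u * u ^ (-c) * u ^ c := this
        _ = ψ u * (u ^ (-c) * u ^ c) := by ring
        _ = ψ u := by rw [← Real.rpow_add hu0, neg_add_cancel, Real.rpow_zero, mul_one]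
      have hpos : (0:ℝ) < Q * ψ t * t ^ (-c) * u ^ c := by
        have := Real.rpow_pos_of_pos ht0 (-c)
        have := Real.rpow_pos_of_pos hu0 c
        positivity
      have h3 : (ψ u)⁻¹ ≤ (Q * ψ t * t ^ (-c) * u ^ c)⁻¹ := by
        exact inv_anti₀ hpos h2
      refine le_trans h3 (le_of_eq ?_)
      rw [Real.rpow_neg ht0.le, Real.rpow_neg hu0.le]
      have h4 : (0:ℝ) < t ^ c := Real.rpow_pos_of_pos ht0 c
      have h5 : (0:ℝ) < u ^ c := Real.rpow_pos_of_pos hu0 c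
      field_simp
    refine le_trans hle (le_of_eq ?_)
    rw [MeasureTheory.integral_const_mul, integral_Ioi_rpow_of_lt (by linarith) hMt]
    have e1 : (M*t) ^ (-c+1) = M ^ (1-c) * t ^ (1-c) := by
      rw [show (-c+1 : ℝ) = 1-c by ring, Real.mul_rpow hM0.le ht0.le]
    rw [e1]
    have h4 : (0:ℝ) < t ^ c := Real.rpow_pos_of_pos ht0 c
    have h5 : t ^ c * t ^ (1-c) = t := by
      rw [← Real.rpow_add ht0, show (c + (1-c) : ℝ) = 1 by ring, Real.rpow_one]
    have h6 : (0:ℝ) < M ^ (1-c) := Real.rpow_pos_of_pos hM0 _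
    rw [show (-c+1:ℝ) = -(c-1) by ring, neg_div_neg_eq, div_mul_div_comm,
      div_eq_div_iff (mul_pos (mul_pos hQ hψt) hc1').ne' (mul_pos (mul_pos hQ hc1') hψt).ne']
    linear_combination (Q * (c-1) * ψ t * M ^ (1-c)) * h5
  -- lower bound on φ t
  have hB : ∀ t : ℝ, 1 ≤ t → Q * t / ψ (2 * t) ≤ φ t := by
    intro t ht
    have ht0 : (0:ℝ) < t := lt_of_lt_of_le one_pos ht
    have h2t : (0:ℝ) < 2 * t := by linarith
    have hψ2t := hψpos _ h2t
    rw [hφ t ht0]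
    have step1 : ∫ u in Ioc t (2*t), (ψ u)⁻¹ ≤ ∫ u in Ioi t, (ψ u)⁻¹ := by
      refine setIntegral_mono_set (hGrey t ht0) ?_ (HasSubset.Subset.eventuallyLE Ioc_subset_Ioi_self)
      filter_upwards [ae_restrict_mem measurableSet_Ioi] with u hu
      exact inv_nonneg.2 (hψpos u (lt_trans ht0 (mem_Ioi.1 hu))).le
    refine le_trans ?_ step1
    have step2 : ∫ _u in Ioc t (2*t), (Q / ψ (2*t)) ≤ ∫ u in Ioc t (2*t), (ψ u)⁻¹ := by
      refine setIntegral_mono_on ?_ ((hGrey t ht0).mono_set Ioc_subset_Ioi_self)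
        measurableSet_Ioc ?_
      · exact integrableOn_const (by rw [Real.volume_Ioc]; exact ENNReal.ofReal_ne_top)
      · intro u hu
        obtain ⟨hu1, hu2⟩ := hu
        have hu0 : (0:ℝ) < u := lt_trans ht0 hu1
        have hψu := hψpos u hu0
        have h1 : Q * ψ u * u ^ (-c) ≤ ψ (2*t) * (2*t) ^ (-c) := hcomp u (2*t) (le_trans ht hu1.le) hu2
        have h2 : (2*t) ^ (-c) ≤ u ^ (-c) := Real.rpow_le_rpow_of_nonpos hu0 hu2 (by linarith)
        have h3 : Q * ψ u ≤ ψ (2*t) := by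
          have hup : (0:ℝ) < u ^ (-c) := Real.rpow_pos_of_pos hu0 _
          have h4 : Q * ψ u * u ^ (-c) ≤ ψ (2*t) * u ^ (-c) :=
            le_trans h1 (mul_le_mul_of_nonneg_left h2 hψ2t.le)
          exact le_of_mul_le_mul_right h4 hup
        rw [div_le_iff₀ hψ2t, ← div_eq_inv_mul, le_div_iff₀ hψu]
        linarith
    refine le_trans (le_of_eq ?_) step2
    rw [MeasureTheory.setIntegral_const, measureReal_def, Real.volume_Ioc,
      ENNReal.toReal_ofReal (by linarith), smul_eq_mul]
    field_simp
    ring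
  -- multiplicative decay of φ
  have hC : ∀ ε : ℝ, 0 < ε → ∃ M : ℝ, 1 ≤ M ∧ ∀ t : ℝ, 1 ≤ t → φ (M * t) ≤ ε * φ t := by
    intro ε hε
    set T : ℝ := 2 / (ε * Q^2 * (c-1)) with hT
    have hT0 : (0:ℝ) < T := by positivity
    set M0 : ℝ := max 1 (T ^ (c-1)⁻¹) with hM0def
    have hM01 : (1:ℝ) ≤ M0 := le_max_left _ _
    have hM00 : (0:ℝ) < M0 := by linarith
    refine ⟨2 * M0, by linarith, ?_⟩
    intro t ht
    have ht0 : (0:ℝ) < t := lt_of_lt_of_le one_pos ht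
    have h2t1 : (1:ℝ) ≤ 2 * t := by linarith
    have key1 : φ (M0 * (2*t)) ≤ M0 ^ (1-c) * (2*t) / (Q * (c-1) * ψ (2*t)) := hA (2*t) M0 h2t1 hM01
    have key2 : Q * t / ψ (2*t) ≤ φ t := hB t ht
    have hMT : T ≤ M0 ^ (c-1) := by
      calc T = (T ^ (c-1)⁻¹) ^ (c-1) := (Real.rpow_inv_rpow hT0.le (by linarith)).symm
      _ ≤ M0 ^ (c-1) := Real.rpow_le_rpow (Real.rpow_nonneg hT0.le _) (le_max_right _ _) (by linarith)
    have hM1c : M0 ^ (1-c) ≤ T⁻¹ := by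
      have e : M0 ^ (1-c) = (M0 ^ (c-1))⁻¹ := by
        rw [← Real.rpow_neg hM00.le, show (-(c-1) : ℝ) = 1 - c by ring]
      rw [e]
      exact inv_anti₀ hT0 hMT
    have hψ2t := hψpos _ (by linarith : (0:ℝ) < 2*t)
    have hφt := hφpos t ht0
    have e : (2:ℝ) * M0 * t = M0 * (2*t) := by ring
    rw [e]
    refine le_trans key1 ?_
    have h1 : M0 ^ (1-c) * (2*t) / (Q * (c-1) * ψ (2*t)) ≤ T⁻¹ * (2*t) / (Q * (c-1) * ψ (2*t)) := by
      gcongr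
    refine le_trans h1 ?_
    have hTinv : T⁻¹ = ε * Q^2 * (c-1) / 2 := by
      rw [hT]
      field_simp
    rw [hTinv]
    have e2 : ε * Q ^ 2 * (c - 1) / 2 * (2 * t) / (Q * (c - 1) * ψ (2 * t)) = ε * (Q * t / ψ (2*t)) := by
      field_simp
    rw [e2]
    exact mul_le_mul_of_nonneg_left key2 hε.le
  -- φinv is antitone
  have hanti : ∀ s t : ℝ, 0 < s → s ≤ t → φinv t ≤ φinv s := by
    intro s t hs hst
    by_contra hlt
    push_neg at hlt
    have ht0 : (0:ℝ) < t := lt_of_lt_of_le hs hst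
    have h1 : φ (φinv t) < φ (φinv s) :=
      hφanti (mem_Ioi.2 (hφinvpos s hs)) (mem_Ioi.2 (hφinvpos t ht0)) hlt
    rw [hinvr s hs, hinvr t ht0] at h1
    linarith
  have hs'pos : ∀ n : ℕ, 0 < s' n := fun n => by
    rw [hs' n]; exact hφpos _ (Real.exp_pos _)
  -- value of b'
  have hbval : ∀ m : ℕ, 1 ≤ m → b' m / r = Real.log m / Real.exp ((m:ℝ)^r) := by
    intro m hm
    have hm0 : (0:ℝ) < (m:ℝ) := by exact_mod_cast hm
    have hφi : φinv (s' m) = Real.exp ((m:ℝ)^r) := by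
      rw [hs' m]; exact hinvl _ (Real.exp_pos _)
    rw [hb' m, hφi, Real.log_exp, Real.log_rpow hm0]
    have hexpne : Real.exp ((m:ℝ)^r) ≠ 0 := (Real.exp_pos _).ne'
    field_simp
  -- Bernoulli-type estimate
  have hbern : ∀ m : ℝ, 1 ≤ m → m ^ r + m ^ (r-1) ≤ (m+1) ^ r := by
    intro m hm
    have hm0 : (0:ℝ) < m := by linarith
    have hm1 : (0:ℝ) ≤ 1/m := by positivity
    have h1 : 1 + r * (1/m) ≤ (1 + 1/m) ^ r :=
      one_add_mul_self_le_rpow_one_add (by linarith) hr.le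
    have h2 : (m+1) ^ r = m ^ r * (1 + 1/m) ^ r := by
      rw [← Real.mul_rpow hm0.le (by positivity)]
      congr 1
      field_simp
    rw [h2]
    have h3 : m ^ r * (1 + r * (1/m)) ≤ m ^ r * (1+1/m) ^ r :=
      mul_le_mul_of_nonneg_left h1 (Real.rpow_nonneg hm0.le r)
    refine le_trans ?_ h3
    have h4 : m ^ (r-1) = m ^ r / m := by rw [Real.rpow_sub hm0, Real.rpow_one]
    rw [h4]
    have h5 : m ^ r / m ≤ r * (m ^ r / m) := by
      have : (0:ℝ) ≤ m ^ r / m := by positivity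
      nlinarith
    have h6 : m ^ r * (1 + r * (1/m)) = m ^ r + r * (m ^ r / m) := by ring
    rw [h6]
    linarith
  -- summability
  have hα : (0:ℝ) < r - 1 := by linarith
  have hsum : Summable (fun n : ℕ => Real.log ((n:ℝ)+2) * Real.exp (-(((n:ℝ)+1) ^ (r-1)))) := by
    set F : ℕ → ℝ := fun n => Real.log ((n:ℝ)+2) * Real.exp (-(((n:ℝ)+1) ^ (r-1))) with hF
    have hF0 : ∀ n, 0 ≤ F n := fun n =>
      mul_nonneg (Real.log_nonneg (by linarith [Nat.cast_nonneg (α := ℝ) n])) (Real.exp_pos _).le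
    have hG : Tendsto (fun y : ℝ => y ^ ((3:ℝ)/(r-1)) * Real.exp (-y)) atTop (nhds 0) := by
      have h := tendsto_rpow_mul_exp_neg_mul_atTop_nhds_zero ((3:ℝ)/(r-1)) 1 one_pos
      exact h.congr fun x => by norm_num
    have h2 : Tendsto (fun n : ℕ => ((n:ℝ)+1) ^ (r-1)) atTop atTop :=
      (tendsto_rpow_atTop hα).comp (tendsto_atTop_add_const_right atTop 1 tendsto_natCast_atTop_atTop)
    have h3 : Tendsto (fun n : ℕ => (((n:ℝ)+1) ^ (r-1)) ^ ((3:ℝ)/(r-1)) * Real.exp (-(((n:ℝ)+1) ^ (r-1)))) atTop (nhds 0) := hG.comp h2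
    have h3' : Tendsto (fun n : ℕ => 2 * ((((n:ℝ)+1) ^ (r-1)) ^ ((3:ℝ)/(r-1)) * Real.exp (-(((n:ℝ)+1) ^ (r-1))))) atTop (nhds 0) := by
      simpa using h3.const_mul 2
    have hbound : ∀ n : ℕ, F n * (n:ℝ)^2 ≤ 2 * ((((n:ℝ)+1) ^ (r-1)) ^ ((3:ℝ)/(r-1)) * Real.exp (-(((n:ℝ)+1) ^ (r-1)))) := by
      intro n
      have hn0 : (0:ℝ) ≤ (n:ℝ) := Nat.cast_nonneg n
      have e1 : (((n:ℝ)+1) ^ (r-1)) ^ ((3:ℝ)/(r-1)) = ((n:ℝ)+1) ^ (3:ℝ) := by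
        rw [← Real.rpow_mul (by linarith), mul_div_cancel₀ _ (ne_of_gt hα)]
      have e2 : ((n:ℝ)+1) ^ (3:ℝ) = ((n:ℝ)+1)^3 := by
        rw [show (3:ℝ) = ((3:ℕ):ℝ) by norm_num, Real.rpow_natCast]
      have hlog : Real.log ((n:ℝ)+2) ≤ (n:ℝ)+2 := by
        have h := Real.log_le_sub_one_of_pos (show (0:ℝ) < (n:ℝ)+2 by linarith)
        linarith
      have hmain : Real.log ((n:ℝ)+2) * (n:ℝ)^2 ≤ 2 * ((n:ℝ)+1)^3 := by
        have h1 : Real.log ((n:ℝ)+2) * (n:ℝ)^2 ≤ ((n:ℝ)+2) * (n:ℝ)^2 := by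
          have : (0:ℝ) ≤ (n:ℝ)^2 := by positivity
          exact mul_le_mul_of_nonneg_right hlog this
        nlinarith
      have hFn : F n = Real.log ((n:ℝ)+2) * Real.exp (-(((n:ℝ)+1) ^ (r-1))) := rfl
      rw [hFn, e1, e2]
      have hexp : (0:ℝ) < Real.exp (-(((n:ℝ)+1) ^ (r-1))) := Real.exp_pos _
      calc Real.log ((n:ℝ)+2) * Real.exp (-(((n:ℝ)+1) ^ (r-1))) * (n:ℝ)^2
          = (Real.log ((n:ℝ)+2) * (n:ℝ)^2) * Real.exp (-(((n:ℝ)+1) ^ (r-1))) := by ring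
        _ ≤ (2 * ((n:ℝ)+1)^3) * Real.exp (-(((n:ℝ)+1) ^ (r-1))) :=
            mul_le_mul_of_nonneg_right hmain hexp.le
        _ = 2 * (((n:ℝ)+1)^3 * Real.exp (-(((n:ℝ)+1) ^ (r-1)))) := by ring
    have h4 : Tendsto (fun n : ℕ => F n * (n:ℝ)^2) atTop (nhds 0) := by
      refine tendsto_of_tendsto_of_tendsto_of_le_of_le tendsto_const_nhds h3' ?_ hbound
      intro n
      exact mul_nonneg (hF0 n) (by positivity)
    have hO : (fun n : ℕ => F n) =O[atTop] (fun n : ℕ => 1/(n:ℝ)^2) := by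
      rw [Asymptotics.isBigO_iff]
      refine ⟨1, ?_⟩
      filter_upwards [h4.eventually (gt_mem_nhds one_pos), eventually_ge_atTop 1] with n h1n h2n
      have hn1 : (1:ℝ) ≤ (n:ℝ) := by exact_mod_cast h2n
      have hn2 : (0:ℝ) < (n:ℝ)^2 := by positivity
      rw [Real.norm_eq_abs, Real.norm_eq_abs, abs_of_nonneg (hF0 n), abs_of_nonneg (by positivity)]
      rw [one_mul, le_div_iff₀ hn2]
      linarith [h1n.le]
    exact summable_of_isBigO_nat (Real.summable_one_div_nat_pow.2 one_lt_two) hO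
  -- the main almost-sure eventual bound, for each k
  have key : ∀ k : ℕ, ∀ᵐ ω ∂P, ∀ᶠ n in atTop,
      U (b' (n+1) / r) ω ≤ ENNReal.ofReal (s' n / ((k:ℝ)+1)) := by
    intro k
    have hk0 : (0:ℝ) < (k:ℝ) + 1 := by positivity
    obtain ⟨M, hM1, hM⟩ := hC (1/((k:ℝ)+1)) (by positivity)
    have hM0 : (0:ℝ) < M := by linarith
    have hphiinv : ∀ n : ℕ, φinv (s' n / ((k:ℝ)+1)) ≤ M * Real.exp ((n:ℝ)^r) := by
      intro n
      have ht1 : (1:ℝ) ≤ Real.exp ((n:ℝ)^r) :=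
        Real.one_le_exp (Real.rpow_nonneg (Nat.cast_nonneg n) r)
      have ht0 : (0:ℝ) < Real.exp ((n:ℝ)^r) := by linarith
      have hMt0 : (0:ℝ) < M * Real.exp ((n:ℝ)^r) := by positivity
      have h1 : φ (M * Real.exp ((n:ℝ)^r)) ≤ (1/((k:ℝ)+1)) * φ (Real.exp ((n:ℝ)^r)) := hM _ ht1
      have h2 : (1/((k:ℝ)+1)) * φ (Real.exp ((n:ℝ)^r)) = s' n / ((k:ℝ)+1) := by
        rw [hs' n]; ring
      rw [h2] at h1
      have h3 := hanti _ _ (hφpos _ hMt0) h1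
      rw [hinvl _ hMt0] at h3
      exact h3
    set E : ℕ → Set Ω := fun n =>
      {ω | ENNReal.ofReal (s' (n+1) / ((k:ℝ)+1)) < U (b' (n+2) / r) ω} with hE
    have hx : ∀ n : ℕ, b' (n+2)/r = Real.log ((n:ℝ)+2) / Real.exp (((n:ℝ)+2)^r) := by
      intro n
      have h := hbval (n+2) (by omega)
      push_cast at h
      exact h
    have hxpos : ∀ n : ℕ, 0 < b' (n+2)/r := by
      intro n
      rw [hx n]
      exact div_pos (Real.log_pos (by linarith [Nat.cast_nonneg (α := ℝ) n])) (Real.exp_pos _)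
    have hτpos : ∀ n : ℕ, 0 < s' (n+1) / ((k:ℝ)+1) := fun n => div_pos (hs'pos _) hk0
    have hPbound : ∀ n : ℕ, P (E n) ≤
        ENNReal.ofReal (M * (Real.log ((n:ℝ)+2) * Real.exp (-(((n:ℝ)+1) ^ (r-1))))) := by
      intro n
      have hEc : E n = {ω | U (b' (n+2)/r) ω ≤ ENNReal.ofReal (s' (n+1)/((k:ℝ)+1))}ᶜ := by
        ext ω; simp [hE, not_le]
      have hmeas2 : MeasurableSet {ω | U (b' (n+2)/r) ω ≤ ENNReal.ofReal (s' (n+1)/((k:ℝ)+1))} :=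
        (hUmeas _) measurableSet_Iic
      rw [hEc, prob_compl_eq_one_sub hmeas2, hUdist _ _ (hxpos n) (hτpos n)]
      have hy0 : 0 ≤ (b' (n+2)/r) * φinv (s' (n+1)/((k:ℝ)+1)) :=
        mul_nonneg (hxpos n).le (hφinvpos _ (hτpos n)).le
      have e1 : -(b' (n+2)/r) * φinv (s' (n+1)/((k:ℝ)+1)) = -((b' (n+2)/r) * φinv (s' (n+1)/((k:ℝ)+1))) := by ring
      rw [e1]
      calc (1:ℝ≥0∞) - ENNReal.ofReal (Real.exp (-((b' (n+2)/r) * φinv (s' (n+1)/((k:ℝ)+1)))))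
          = ENNReal.ofReal (1 - Real.exp (-((b' (n+2)/r) * φinv (s' (n+1)/((k:ℝ)+1))))) := by
            rw [ENNReal.ofReal_sub _ (Real.exp_pos _).le, ENNReal.ofReal_one]
        _ ≤ ENNReal.ofReal ((b' (n+2)/r) * φinv (s' (n+1)/((k:ℝ)+1))) := by
            refine ENNReal.ofReal_le_ofReal ?_
            have h := Real.add_one_le_exp (-((b' (n+2)/r) * φinv (s' (n+1)/((k:ℝ)+1))))
            linarith
        _ ≤ ENNReal.ofReal (M * (Real.log ((n:ℝ)+2) * Real.exp (-(((n:ℝ)+1) ^ (r-1))))) := by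
            refine ENNReal.ofReal_le_ofReal ?_
            have hb1 := hphiinv (n+1)
            push_cast at hb1
            have hlog0 : (0:ℝ) ≤ Real.log ((n:ℝ)+2) :=
              Real.log_nonneg (by linarith [Nat.cast_nonneg (α := ℝ) n])
            have step : (b' (n+2)/r) * φinv (s' (n+1)/((k:ℝ)+1)) ≤
                (Real.log ((n:ℝ)+2) / Real.exp (((n:ℝ)+2)^r)) * (M * Real.exp (((n:ℝ)+1)^r)) := by
              rw [hx n]
              refine mul_le_mul_of_nonneg_left hb1 (by positivity)
            refine le_trans step ?_
            have e3 : (Real.log ((n:ℝ)+2) / Real.exp (((n:ℝ)+2)^r)) * (M * Real.exp (((n:ℝ)+1)^r))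
                = M * (Real.log ((n:ℝ)+2) * Real.exp (((n:ℝ)+1)^r - ((n:ℝ)+2)^r)) := by
              rw [Real.exp_sub]; ring
            rw [e3]
            have e4 : Real.exp (((n:ℝ)+1)^r - ((n:ℝ)+2)^r) ≤ Real.exp (-(((n:ℝ)+1) ^ (r-1))) := by
              rw [Real.exp_le_exp]
              have h := hbern ((n:ℝ)+1) (by linarith [Nat.cast_nonneg (α := ℝ) n])
              have e5 : ((n:ℝ)+1+1) = ((n:ℝ)+2) := by ring
              rw [e5] at h
              linarith
            have := mul_le_mul_of_nonneg_left e4 hlog0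
            nlinarith
    have htsum : (∑' n, P (E n)) ≠ ⊤ := by
      refine ne_top_of_le_ne_top ?_ (ENNReal.tsum_le_tsum hPbound)
      rw [← ENNReal.ofReal_tsum_of_nonneg (fun n => mul_nonneg hM0.le (mul_nonneg
        (Real.log_nonneg (by linarith [Nat.cast_nonneg (α := ℝ) n])) (Real.exp_pos _).le))
        (hsum.mul_left M)]
      exact ENNReal.ofReal_ne_top
    filter_upwards [ae_eventually_notMem htsum] with ω hω
    obtain ⟨N, hN⟩ := eventually_atTop.1 hω
    refine eventually_atTop.2 ⟨N+2, fun n hn => ?_⟩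
    have h := hN (n-1) (by omega)
    simp only [hE, Set.mem_setOf_eq, not_lt] at h
    have e1 : n - 1 + 1 = n := by omega
    have e2 : n - 1 + 2 = n + 1 := by omega
    rw [e1, e2] at h
    exact h
  have key' : ∀ᵐ ω ∂P, ∀ k : ℕ, ∀ᶠ n in atTop,
      U (b' (n+1) / r) ω ≤ ENNReal.ofReal (s' n / ((k:ℝ)+1)) := ae_all_iff.2 key
  filter_upwards [key'] with ω hω
  rw [ENNReal.tendsto_nhds_zero]
  intro ε hε
  obtain ⟨m, hm⟩ := ENNReal.exists_inv_nat_lt hε.ne'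
  have hm0 : m ≠ 0 := by
    rintro rfl
    rw [Nat.cast_zero, ENNReal.inv_zero] at hm
    exact not_top_lt hm
  have hmR : (0:ℝ) < (m:ℝ) := by exact_mod_cast Nat.pos_of_ne_zero hm0
  filter_upwards [hω m] with n hn
  calc U (b' (n+1)/r) ω / ENNReal.ofReal (s' n)
      ≤ ENNReal.ofReal (s' n / ((m:ℝ)+1)) / ENNReal.ofReal (s' n) :=
        ENNReal.div_le_div_right hn _
    _ = ENNReal.ofReal ((s' n / ((m:ℝ)+1)) / s' n) := (ENNReal.ofReal_div_of_pos (hs'pos n)).symm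
    _ = ENNReal.ofReal (((m:ℝ)+1)⁻¹) := by
        congr 1
        rw [div_div, mul_comm ((m:ℝ)+1) (s' n), ← div_div, div_self (hs'pos n).ne', one_div]
    _ ≤ ENNReal.ofReal (((m:ℝ))⁻¹) := by
        refine ENNReal.ofReal_le_ofReal ?_
        refine inv_anti₀ hmR (by linarith)
    _ = (↑m)⁻¹ := by rw [ENNReal.ofReal_inv_of_pos hmR, ENNReal.ofReal_natCast]
    _ ≤ ε := hm.le
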